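/- Let X be a CAT(0) space and let g, h be hyperbolic isometries with minsets min(g), min(h). If min(g) ∩ min(h) is nonempty and unbounded, and the axes of g through points of the intersection agree as sets with axes of h, and the action of ⟨g,h⟩ is proper, then gⁿ = hᵐ for some nonzero integers n, m; in particular ⟨g⟩ ∩ ⟨h⟩ ≠ {1}. -/

import Mathlib

/-- Let `g`, `h` be hyperbolic isometries of a CAT(0) space whose minsets
share a common axis (a geodesic line `A` along which both translate, by `lg, lh > 0`).
If the subgroup `⟨g, h⟩` acts (metrically) properly, then `gⁿ = hᵐ` for some nonzero
integers `n`, `m`; in particular `⟨g⟩ ∩ ⟨h⟩ ≠ {1}`. -/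
theorem common_axis_commensurable
    {G X : Type*} [Group G] [MetricSpace X] [MulAction G X]
    (isom : ∀ (g : G) (x y : X), dist (g • x) (g • y) = dist x y)
    (g h : G) (lg lh : ℝ) (hlg : 0 < lg) (hlh : 0 < lh)
    (A : ℝ → X) (hA : ∀ s t : ℝ, dist (A s) (A t) = |s - t|)
    (hgax : ∀ t : ℝ, g • A t = A (t + lg))
    (hhax : ∀ t : ℝ, h • A t = A (t + lh))
    (hproper : ∀ (x : X) (R : ℝ),
      {k : G | k ∈ Subgroup.closure {g, h} ∧ dist x (k • x) ≤ R}.Finite) :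
    ∃ n m : ℤ, n ≠ 0 ∧ m ≠ 0 ∧ g ^ n = h ^ m := by
  -- zpow action on the axis
  have key : ∀ (k : G) (lk : ℝ), (∀ t, k • A t = A (t + lk)) →
      ∀ (n : ℤ) (t : ℝ), k ^ n • A t = A (t + n * lk) := by
    intro k lk hk n
    induction n using Int.induction_on with
    | zero => intro t; simp
    | succ n ih =>
        intro t
        have e : k ^ ((n : ℤ) + 1) = k ^ (n : ℤ) * k := by rw [zpow_add_one]
        rw [e, mul_smul, hk t, ih (t + lk)]
        congr 1; push_cast; ring
    | pred n ih =>
        intro t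
        have hkinv : ∀ t, k⁻¹ • A t = A (t - lk) := by
          intro t
          have hh := hk (t - lk)
          rw [show t - lk + lk = t by ring] at hh
          rw [← hh, inv_smul_smul]
        have e : k ^ (-(n : ℤ) - 1) = k ^ (-(n : ℤ)) * k⁻¹ := by rw [zpow_sub_one]
        rw [e, mul_smul, hkinv t, ih (t - lk)]
        congr 1; push_cast; ring
  have hgmem : g ∈ Subgroup.closure ({g, h} : Set G) :=
    Subgroup.subset_closure (by simp)
  have hhmem : h ∈ Subgroup.closure ({g, h} : Set G) :=
    Subgroup.subset_closure (by simp)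
  set m : ℕ → ℤ := fun n => ⌊(n * lg) / lh⌋ with hm
  set f : ℕ → G := fun n => g ^ (n : ℤ) * h ^ (-(m n)) with hf
  have hfmem : ∀ n, f n ∈ Subgroup.closure ({g, h} : Set G) := fun n =>
    mul_mem (zpow_mem hgmem _) (zpow_mem hhmem _)
  have hfact : ∀ n : ℕ, f n • A 0 = A (0 + (-(m n)) * lh + (n : ℤ) * lg) := by
    intro n
    rw [hf]
    simp only [mul_smul]
    rw [key h lh hhax (-(m n)) 0, key g lg hgax (n : ℤ) _]
    congr 1
    push_cast
    ring
  have hfdist : ∀ n : ℕ, dist (A 0) (f n • A 0) ≤ lh := by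
    intro n
    rw [hfact n, hA]
    have h1 : (m n : ℝ) ≤ (n * lg) / lh := Int.floor_le _
    have h2 : (n * lg) / lh < m n + 1 := Int.lt_floor_add_one _
    have h1' : (m n : ℝ) * lh ≤ n * lg := (le_div_iff₀ hlh).mp h1
    have h2' : (n : ℝ) * lg < ((m n : ℝ) + 1) * lh := (div_lt_iff₀ hlh).mp h2
    rw [abs_le]
    push_cast
    constructor <;> nlinarith
  -- pigeonhole
  have hS : (Set.Finite {k : G | k ∈ Subgroup.closure ({g, h} : Set G)
      ∧ dist (A 0) (k • A 0) ≤ lh}) := hproper (A 0) lh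
  haveI := hS.to_subtype
  obtain ⟨n1, n2, hne, heq'⟩ := Finite.exists_ne_map_eq_of_infinite
    (fun n : ℕ => (⟨f n, hfmem n, hfdist n⟩ :
      {k : G | k ∈ Subgroup.closure ({g, h} : Set G) ∧ dist (A 0) (k • A 0) ≤ lh}))
  have heq : f n1 = f n2 := by
    simpa using congrArg Subtype.val heq'
  have hgh : g ^ ((n1 : ℤ) - n2) = h ^ (m n1 - m n2) := by
    have e : g ^ (n1 : ℤ) * h ^ (-(m n1)) = g ^ (n2 : ℤ) * h ^ (-(m n2)) := heq
    calc g ^ ((n1 : ℤ) - n2)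
        = (g ^ (n2 : ℤ))⁻¹ * (g ^ (n1 : ℤ) * h ^ (-(m n1))) * h ^ (m n1) := by group
      _ = (g ^ (n2 : ℤ))⁻¹ * (g ^ (n2 : ℤ) * h ^ (-(m n2))) * h ^ (m n1) := by rw [e]
      _ = h ^ (m n1 - m n2) := by group
  refine ⟨(n1 : ℤ) - n2, m n1 - m n2, ?_, ?_, hgh⟩
  · intro hc
    apply hne
    have : (n1 : ℤ) = n2 := by linarith [sub_eq_zero.mp hc]
    exact_mod_cast this
  · intro hc
    rw [hc, zpow_zero] at hgh
    have h0 : A (0 + ((((n1 : ℤ) - n2) : ℤ) : ℝ) * lg) = A 0 := by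
      rw [← key g lg hgax ((n1 : ℤ) - n2) 0, hgh, one_smul]
    have hd : dist (A (0 + ((((n1 : ℤ) - n2) : ℤ) : ℝ) * lg)) (A 0) = 0 := by
      rw [h0, dist_self]
    rw [hA] at hd
    have habs := abs_eq_zero.mp hd
    push_cast at habs
    have hmul : ((n1 : ℝ) - n2) * lg = 0 := by linarith
    have hn0 : (n1 : ℝ) = n2 := by
      rcases mul_eq_zero.mp hmul with h' | h'
      · linarith
      · exact absurd h' (ne_of_gt hlg)
    exact hne (by exact_mod_cast hn0)
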